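/- Let f : ℝⁿ → ℝ be differentiable, attaining its global minimum value f* = f(x*), and satisfying the Polyak–Łojasiewicz inequality f(y) − f* ≤ (1/(2σ))‖∇f(y)‖² for all y ∈ ℝⁿ, with σ > 0. Let t₀ ∈ ℝ, T_p > 0, take r = 1 so that 𝒯(t) = T_p/(T_p + t₀ − t) on [t₀, t₀ + T_p), and let k > 0. Suppose x : [t₀, t₀ + T_p) → ℝⁿ is differentiable with ẋ(t) = −k 𝒯(t) ∇f(x(t)). Then for every t ∈ [t₀, t₀ + T_p), f(x(t)) − f* ≤ (1 − (t − t₀)/T_p)^{2σ k T_p} · (f(x(t₀)) − f*). -/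

import Mathlib

/-- explicit polynomial convergence rate for the time-varying
feedback gradient flow of a PŁ function with `r = 1`, i.e.
`𝒯(t) = T_p/(T_p + t₀ - t)`:
`f(x(t)) - f* ≤ (1 - (t - t₀)/T_p)^{2σkT_p} (f(x(t₀)) - f*)`. -/
theorem pl_gradient_flow_polynomial_rate_r_one
    (n : ℕ) (f : EuclideanSpace ℝ (Fin n) → ℝ) (hf : Differentiable ℝ f)
    (xstar : EuclideanSpace ℝ (Fin n)) (hmin : ∀ y, f xstar ≤ f y)
    (σ : ℝ) (hσ : 0 < σ)
    (hPL : ∀ y, f y - f xstar ≤ 1 / (2 * σ) * ‖gradient f y‖ ^ 2)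
    (t₀ Tp : ℝ) (hTp : 0 < Tp) (k : ℝ) (hk : 0 < k)
    (x : ℝ → EuclideanSpace ℝ (Fin n))
    (hx : ∀ t ∈ Set.Ico t₀ (t₀ + Tp),
      HasDerivAt x (-(k * (Tp / (Tp + t₀ - t))) • gradient f (x t)) t) :
    ∀ t ∈ Set.Ico t₀ (t₀ + Tp),
      f (x t) - f xstar
        ≤ (1 - (t - t₀) / Tp) ^ (2 * σ * k * Tp) * (f (x t₀) - f xstar) := by
  intro t ht
  set c : ℝ := 2 * σ * k * Tp with hc
  have hcpos : 0 < c := by positivity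
  set h : ℝ → ℝ := fun s => 1 - (s - t₀) / Tp with hh
  set V : ℝ → ℝ := fun s => f (x s) - f xstar with hV
  set g : ℝ → ℝ := fun s => V s * h s ^ (-c) with hg
  -- positivity of h on the interval
  have hhpos : ∀ s ∈ Set.Ico t₀ (t₀ + Tp), 0 < h s := by
    intro s hs
    have h1 := hs.1
    have h2 := hs.2
    have : (s - t₀) / Tp < 1 := by
      rw [div_lt_one hTp]; linarith
    simp only [hh]; linarith
  -- derivative of V
  have hVderiv : ∀ s ∈ Set.Ico t₀ (t₀ + Tp),
      HasDerivAt V (-(k * (Tp / (Tp + t₀ - s))) * ‖gradient f (x s)‖ ^ 2) s := by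
    intro s hs
    have hgrad := (hf (x s)).hasGradientAt.hasFDerivAt
    have hcomp := hgrad.comp_hasDerivAt s (hx s hs)
    have : (InnerProductSpace.toDual ℝ _ (gradient f (x s)))
        (-(k * (Tp / (Tp + t₀ - s))) • gradient f (x s))
        = -(k * (Tp / (Tp + t₀ - s))) * ‖gradient f (x s)‖ ^ 2 := by
      rw [InnerProductSpace.toDual_apply_apply, real_inner_smul_right,
        real_inner_self_eq_norm_sq]
    rw [this] at hcomp
    exact hcomp.sub_const (f xstar)
  -- derivative of h
  have hhderiv : ∀ s : ℝ, HasDerivAt h (-(1 / Tp)) s := by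
    intro s
    have : HasDerivAt (fun s : ℝ => 1 - (s - t₀) / Tp) (-(1 / Tp)) s := by
      have h1 : HasDerivAt (fun s : ℝ => (s - t₀) / Tp) (1 / Tp) s := by
        simpa using ((hasDerivAt_id s).sub_const t₀).div_const Tp
      exact ((hasDerivAt_const s (1 : ℝ)).sub h1).congr_deriv (by ring)
    exact this
  -- derivative of g and its nonpositivity
  have hgderiv : ∀ s ∈ Set.Ico t₀ (t₀ + Tp), ∃ d ≤ 0, HasDerivAt g d s := by
    intro s hs
    have hhs : 0 < h s := hhpos s hs
    have hVd := hVderiv s hs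
    have hhd : HasDerivAt (fun s => h s ^ (-c)) (-(1 / Tp) * (-c) * h s ^ (-c - 1)) s :=
      (hhderiv s).rpow_const (Or.inl hhs.ne')
    have hgd := hVd.mul hhd
    refine ⟨_, ?_, hgd⟩
    -- show derivative is ≤ 0
    have hTph : Tp + t₀ - s = Tp * h s := by
      simp only [hh]; field_simp; ring
    have hVnn : 0 ≤ V s := by simp only [hV, sub_nonneg]; exact hmin _
    have hPLs : 2 * σ * V s ≤ ‖gradient f (x s)‖ ^ 2 := by
      have := hPL (x s)
      have h2σ : (0:ℝ) < 2 * σ := by linarith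
      rw [div_mul_eq_mul_div, le_div_iff₀ h2σ, one_mul] at this
      simpa [hV, mul_comm] using this
    have hpow : h s ^ (-c) = h s ^ (-c - 1) * h s := by
      rw [← Real.rpow_add_one hhs.ne']; ring_nf
    have hpow1 : (0:ℝ) < h s ^ (-c - 1) := Real.rpow_pos_of_pos hhs _
    have hcoef : k * (Tp / (Tp + t₀ - s)) = k / h s := by
      rw [hTph]; field_simp
    rw [hcoef, hpow]
    have hgradnn : (0:ℝ) ≤ ‖gradient f (x s)‖ ^ 2 := by positivity
    have key : -(k / h s) * ‖gradient f (x s)‖ ^ 2 * (h s ^ (-c - 1) * h s)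
        = -(k * ‖gradient f (x s)‖ ^ 2) * h s ^ (-c - 1) := by
      field_simp
    rw [key]
    have hc2 : V s * (-(1 / Tp) * -c * h s ^ (-c - 1)) = (2 * σ * k * V s) * h s ^ (-c - 1) := by
      rw [hc]; field_simp
    rw [hc2]
    have : -(k * ‖gradient f (x s)‖ ^ 2) + 2 * σ * k * V s ≤ 0 := by nlinarith
    nlinarith
  -- g is antitone on the interval
  have hgcont : ContinuousOn g (Set.Ico t₀ (t₀ + Tp)) := by
    intro s hs
    obtain ⟨d, _, hd⟩ := hgderiv s hs
    exact hd.continuousAt.continuousWithinAt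
  have hint : interior (Set.Ico t₀ (t₀ + Tp)) = Set.Ioo t₀ (t₀ + Tp) := interior_Ico
  have hanti : AntitoneOn g (Set.Ico t₀ (t₀ + Tp)) := by
    apply antitoneOn_of_deriv_nonpos (convex_Ico _ _) hgcont
    · intro s hs
      rw [hint] at hs
      obtain ⟨d, _, hd⟩ := hgderiv s ⟨le_of_lt hs.1, hs.2⟩
      exact hd.differentiableAt.differentiableWithinAt
    · intro s hs
      rw [hint] at hs
      obtain ⟨d, hd0, hd⟩ := hgderiv s ⟨le_of_lt hs.1, hs.2⟩
      rw [hd.deriv]; exact hd0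
  have ht₀ : t₀ ∈ Set.Ico t₀ (t₀ + Tp) := ⟨le_refl _, by linarith⟩
  have hgle : g t ≤ g t₀ := hanti ht₀ ht ht.1
  have hgt₀ : g t₀ = V t₀ := by
    simp only [hg, hh]
    norm_num
  have hht : 0 < h t := hhpos t ht
  have hVt : V t = g t * h t ^ c := by
    simp only [hg]
    rw [mul_assoc, ← Real.rpow_add hht]
    norm_num
  have hpowc : (0:ℝ) < h t ^ c := Real.rpow_pos_of_pos hht _
  calc f (x t) - f xstar = V t := rfl
    _ = g t * h t ^ c := hVt
    _ ≤ g t₀ * h t ^ c := by nlinarith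
    _ = h t ^ c * (f (x t₀) - f xstar) := by rw [hgt₀]; ring
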